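/- Let f : [0,1] → [0,1] be continuous and let U ⊆ [0,1] be a nondegenerate interval such that f^m(U) ∩ U ≠ ∅ for some m ≥ 1. Then there exists a closed interval I ⊇ U and an integer n ≥ 1 such that f^n(I) ⊆ I, the closure of the orbit ⋃_{i≥0} f^i(U) equals ⋃_{i=0}^{n-1} f^i(I), and the set (⋃_{i=0}^{n-1} f^i(I)) \ (⋃_{i≥0} f^i(U)) is finite. -/

import Mathlib

open Set Function

/-- For a nonempty bounded order-connected set of reals, the open interval between its
inf and sup is contained in it. -/
lemma aux_Ioo_subset (s : Set ℝ) (hne : s.Nonempty) (hbd : BddBelow s) (hba : BddAbove s)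
    (hc : s.OrdConnected) : Ioo (sInf s) (sSup s) ⊆ s := by
  intro x hx
  obtain ⟨y, hy, hyx⟩ := (csInf_lt_iff hbd hne).mp hx.1
  obtain ⟨z, hz, hxz⟩ := (lt_csSup_iff hba hne).mp hx.2
  exact hc.out hy hz ⟨hyx.le, hxz.le⟩

/-- The closure of a nonempty bounded order-connected set of reals is the closed interval
between its inf and sup. -/
lemma aux_closure_eq (s : Set ℝ) (hne : s.Nonempty) (hbd : BddBelow s) (hba : BddAbove s)
    (hc : s.OrdConnected) : closure s = Icc (sInf s) (sSup s) := by
  apply Subset.antisymm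
  · exact closure_minimal (fun x hx => ⟨csInf_le hbd hx, le_csSup hba hx⟩) isClosed_Icc
  · rcases eq_or_lt_of_le (csInf_le_csSup hne hbd hba) with h | h
    · intro x hx
      have hxe : x = sInf s := le_antisymm (h ▸ hx.2) hx.1
      exact hxe ▸ csInf_mem_closure hne hbd
    · calc Icc (sInf s) (sSup s) = closure (Ioo (sInf s) (sSup s)) := (closure_Ioo h.ne).symm
        _ ⊆ closure s := closure_mono (aux_Ioo_subset s hne hbd hba hc)

/-- A nonempty bounded order-connected set of reals misses at most two points
(its inf and sup) of its closure. -/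
lemma aux_diff (s : Set ℝ) (hne : s.Nonempty) (hbd : BddBelow s) (hba : BddAbove s)
    (hc : s.OrdConnected) : closure s \ s ⊆ {sInf s, sSup s} := by
  intro x hx
  have hxI : x ∈ Icc (sInf s) (sSup s) := (aux_closure_eq s hne hbd hba hc) ▸ hx.1
  by_contra hcon
  simp only [mem_insert_iff, mem_singleton_iff, not_or] at hcon
  have : x ∈ Ioo (sInf s) (sSup s) :=
    ⟨lt_of_le_of_ne hxI.1 (Ne.symm hcon.1), lt_of_le_of_ne hxI.2 hcon.2⟩
  exact hx.2 (aux_Ioo_subset s hne hbd hba hc this)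

theorem stmt_0 (f : ℝ → ℝ) (hf : ContinuousOn f (Icc 0 1))
    (hmaps : MapsTo f (Icc 0 1) (Icc 0 1))
    (U : Set ℝ) (hU : U ⊆ Icc 0 1) (hUconn : U.OrdConnected) (hUnt : U.Nontrivial)
    (m : ℕ) (hm : 1 ≤ m) (hint : ((f^[m] '' U) ∩ U).Nonempty) :
    ∃ (a b : ℝ) (n : ℕ), 1 ≤ n ∧ U ⊆ Icc a b ∧ Icc a b ⊆ Icc 0 1 ∧
      f^[n] '' Icc a b ⊆ Icc a b ∧
      closure (⋃ i, f^[i] '' U) = ⋃ i ∈ Finset.range n, f^[i] '' Icc a b ∧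
      ((⋃ i ∈ Finset.range n, f^[i] '' Icc a b) \ (⋃ i, f^[i] '' U)).Finite := by
  -- basic facts about iterates
  have hcont : ∀ i, ContinuousOn (f^[i]) (Icc (0:ℝ) 1) := by
    intro i
    induction i with
    | zero => simpa using continuousOn_id
    | succ n ih =>
      rw [Function.iterate_succ]
      exact ih.comp hf hmaps
  have hmapsI : ∀ i, MapsTo (f^[i]) (Icc (0:ℝ) 1) (Icc 0 1) := fun i => hmaps.iterate i
  obtain ⟨x0, hx0f, hx0U⟩ := hint
  have hUne : U.Nonempty := hUnt.nonempty
  -- the building blocks g k = f^[k*m] '' U, and their union L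
  set g : ℕ → Set ℝ := fun k => f^[k * m] '' U with hg
  set L : Set ℝ := ⋃ k, g k with hLdef
  have hgsub : ∀ k, g k ⊆ Icc 0 1 := fun k =>
    (image_mono (f := f^[k * m]) hU).trans (hmapsI (k * m)).image_subset
  have hgne : ∀ k, (g k).Nonempty := fun k => hUne.image _
  have hgpre : ∀ k, IsPreconnected (g k) := by
    intro k
    exact (isPreconnected_iff_ordConnected.mpr hUconn).image _ ((hcont (k * m)).mono hU)
  -- consecutive blocks intersect
  have hchain : ∀ k, f^[k * m] x0 ∈ g (k + 1) ∩ g k := by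
    intro k
    constructor
    · obtain ⟨u, hu, hux⟩ := hx0f
      refine ⟨u, hu, ?_⟩
      rw [Nat.succ_mul, Function.iterate_add_apply, hux]
    · exact ⟨x0, hx0U, rfl⟩
  -- partial unions are preconnected
  have hpre : ∀ k, IsPreconnected (⋃ j ∈ Finset.range (k + 1), g j) := by
    intro k
    induction k with
    | zero => simpa using hgpre 0
    | succ n ih =>
      have hins : (⋃ j ∈ Finset.range (n + 2), g j) = g (n + 1) ∪ ⋃ j ∈ Finset.range (n + 1), g j := by
        rw [Finset.range_add_one]
        simp [Set.biUnion_insert]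
      rw [hins]
      refine IsPreconnected.union (f^[n * m] x0) (hchain n).1 ?_ (hgpre (n + 1)) ih
      exact mem_biUnion (Finset.mem_range.mpr (Nat.lt_succ_self n)) (hchain n).2
  have hPsub : ∀ k, (⋃ j ∈ Finset.range (k + 1), g j) ⊆ L := by
    intro k
    exact iUnion₂_subset fun j _ => subset_iUnion g j
  -- L is order-connected
  have hLconn : L.OrdConnected := by
    constructor
    intro x hx y hy z hz
    obtain ⟨j, hj⟩ := mem_iUnion.mp hx
    obtain ⟨k, hk⟩ := mem_iUnion.mp hy
    have hxP : x ∈ ⋃ i ∈ Finset.range (max j k + 1), g i :=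
      mem_biUnion (Finset.mem_range.mpr (Nat.lt_succ_of_le (le_max_left j k))) hj
    have hyP : y ∈ ⋃ i ∈ Finset.range (max j k + 1), g i :=
      mem_biUnion (Finset.mem_range.mpr (Nat.lt_succ_of_le (le_max_right j k))) hk
    exact hPsub (max j k)
      ((isPreconnected_iff_ordConnected.mp (hpre (max j k))).out hxP hyP hz)
  have hLsub : L ⊆ Icc 0 1 := iUnion_subset hgsub
  have hg0 : g 0 = U := by simp [hg]
  have hLne : L.Nonempty := hUne.mono (hg0 ▸ subset_iUnion g 0)
  have hLbd : BddBelow L := ⟨0, fun x hx => (hLsub hx).1⟩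
  have hLba : BddAbove L := ⟨1, fun x hx => (hLsub hx).2⟩
  have hUL : U ⊆ L := hg0 ▸ subset_iUnion g 0
  -- the closed interval I = Icc a b is the closure of L
  set a : ℝ := sInf L with ha
  set b : ℝ := sSup L with hb
  have hclo : closure L = Icc a b := aux_closure_eq L hLne hLbd hLba hLconn
  have hclsub : closure L ⊆ Icc 0 1 := closure_minimal hLsub isClosed_Icc
  -- invariance: f^[m] '' L ⊆ L
  have hinv : f^[m] '' L ⊆ L := by
    rintro _ ⟨x, hx, rfl⟩
    obtain ⟨k, hk⟩ := mem_iUnion.mp hx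
    obtain ⟨u, hu, rfl⟩ := hk
    refine mem_iUnion.mpr ⟨k + 1, u, hu, ?_⟩
    rw [Nat.succ_mul, Nat.add_comm, Function.iterate_add_apply]
  -- compactness and closure-image facts
  have hcomp : IsCompact (closure L) :=
    isCompact_Icc.of_isClosed_subset isClosed_closure hclsub
  have hclosim : ∀ i, f^[i] '' closure L = closure (f^[i] '' L) := by
    intro i
    apply Subset.antisymm
    · exact ((hcont i).mono hclsub).image_closure
    · exact closure_minimal (image_mono (f := f^[i]) subset_closure)
        (hcomp.image_of_continuousOn ((hcont i).mono hclsub)).isClosed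
  -- invariance of the closed interval
  have hinvI : f^[m] '' Icc a b ⊆ Icc a b := by
    rw [← hclo, hclosim m]
    exact closure_mono hinv
  -- the orbit equals the union of the first m images of L
  have horb : (⋃ i ∈ Finset.range m, f^[i] '' L) = ⋃ i, f^[i] '' U := by
    ext z
    simp only [mem_iUnion, Finset.mem_range, exists_prop]
    constructor
    · rintro ⟨i, hi, x, hx, rfl⟩
      obtain ⟨k, hk⟩ := mem_iUnion.mp hx
      obtain ⟨u, hu, rfl⟩ := hk
      exact ⟨i + k * m, u, hu, Function.iterate_add_apply f i (k * m) u⟩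
    · rintro ⟨i, u, hu, rfl⟩
      refine ⟨i % m, Nat.mod_lt _ hm, f^[(i / m) * m] u, mem_iUnion.mpr ⟨i / m, u, hu, rfl⟩, ?_⟩
      rw [← Function.iterate_add_apply]
      congr 1
      exact Nat.mod_add_div' i m
  -- closure of the orbit
  have hcloeq : closure (⋃ i, f^[i] '' U) = ⋃ i ∈ Finset.range m, f^[i] '' Icc a b := by
    rw [← horb, Finset.closure_biUnion]
    apply iUnion₂_congr
    intro i _
    rw [← hclosim i, hclo]
  -- properties of the pieces T i = f^[i] '' L
  have hTne : ∀ i, (f^[i] '' L).Nonempty := fun i => hLne.image _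
  have hTsub : ∀ i, f^[i] '' L ⊆ Icc 0 1 := fun i =>
    (image_mono (f := f^[i]) hLsub).trans (hmapsI i).image_subset
  have hTconn : ∀ i, (f^[i] '' L).OrdConnected := by
    intro i
    exact isPreconnected_iff_ordConnected.mp
      ((isPreconnected_iff_ordConnected.mpr hLconn).image _ ((hcont i).mono hLsub))
  -- the difference is finite
  have hdiffsub : (⋃ i ∈ Finset.range m, f^[i] '' Icc a b) \ (⋃ i, f^[i] '' U) ⊆
      ⋃ i ∈ Finset.range m, ({sInf (f^[i] '' L), sSup (f^[i] '' L)} : Set ℝ) := by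
    rintro z ⟨hz1, hz2⟩
    simp only [mem_iUnion, Finset.mem_range, exists_prop] at hz1 ⊢
    obtain ⟨i, hi, hzi⟩ := hz1
    refine ⟨i, hi, ?_⟩
    have hzc : z ∈ closure (f^[i] '' L) := by rwa [← hclosim i, hclo]
    have hznot : z ∉ f^[i] '' L := by
      intro hzin
      exact hz2 (horb ▸ mem_biUnion (Finset.mem_range.mpr hi) hzin)
    exact aux_diff _ (hTne i) ⟨0, fun x hx => ((hTsub i) hx).1⟩
      ⟨1, fun x hx => ((hTsub i) hx).2⟩ (hTconn i) ⟨hzc, hznot⟩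
  refine ⟨a, b, m, hm, hUL.trans (hclo ▸ subset_closure), hclo ▸ hclsub, hinvI, hcloeq, ?_⟩
  refine Set.Finite.subset ?_ hdiffsub
  exact Set.Finite.biUnion (Finset.range m).finite_toSet
    (fun i _ => (Set.finite_singleton _).insert _)
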